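/- For every real number x with 0 ≤ x < 1, the series ∑_{D=1}^{∞} (D^{D+2}/D!)·(x·e^{−x})^D converges and its sum equals (x + 2x^2)/(1−x)^5. -/

import Mathlib

/- Proof of: ∑_{D=1}^∞ (D^{D+2}/D!)·(x·e^{−x})^D = (x + 2x²)/(1−x)^5 for 0 ≤ x < 1.

Strategy: for |x| < 1/8 expand e^{-nx} into its power series and regroup the
(absolutely convergent) double series diagonally; the diagonal coefficients are
computed via iterated forward differences (a Stirling-number identity), giving
the power series of (x+2x²)/(1−x)^5.  The identity is then extended to all of
[0,1) by the identity theorem for real-analytic functions. -/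


open Finset

-- forward difference of a power function
lemma fwd_pow (m : ℕ) :
    fwdDiff (1:ℕ) (fun k : ℕ => (k : ℝ) ^ m)
      = fun k : ℕ => ∑ i ∈ Finset.range m, (m.choose i : ℝ) * (k : ℝ) ^ i := by
  funext k
  have h := add_pow (k : ℝ) (1 : ℝ) m
  simp only [fwdDiff]
  push_cast
  rw [h, Finset.sum_range_succ]
  simp [mul_comm]

lemma iter_sum (N m : ℕ) (c : ℕ → ℝ) :
    (fwdDiff (1:ℕ))^[N] (fun k : ℕ => ∑ i ∈ Finset.range m, c i * (k : ℝ) ^ i)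
      = fun y : ℕ => ∑ i ∈ Finset.range m, c i * ((fwdDiff (1:ℕ))^[N] (fun k : ℕ => (k : ℝ) ^ i) y) := by
  have : (fun k : ℕ => ∑ i ∈ Finset.range m, c i * (k : ℝ) ^ i)
      = ∑ i ∈ Finset.range m, c i • (fun k : ℕ => (k : ℝ) ^ i) := by
    funext k; simp [Finset.sum_apply]
  rw [this, fwdDiff_iter_finset_sum]
  funext y
  simp only [Finset.sum_apply, Pi.smul_apply]
  refine Finset.sum_congr rfl fun i _ => ?_
  rw [fwdDiff_iter_const_smul]
  simp

lemma dpow_lt : ∀ N : ℕ, ∀ j < N, (fwdDiff (1:ℕ))^[N] (fun k : ℕ => (k : ℝ) ^ j) = fun _ => 0 := by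
  intro N
  induction N with
  | zero => omega
  | succ N ih =>
      intro j hj
      rw [Function.iterate_succ_apply, fwd_pow, iter_sum]
      funext y
      refine Finset.sum_eq_zero fun i hi => ?_
      rw [ih i (by simp at hi; omega)]
      simp

lemma dpow_eq : ∀ N : ℕ, (fwdDiff (1:ℕ))^[N] (fun k : ℕ => (k : ℝ) ^ N)
    = fun _ => (N.factorial : ℝ) := by
  intro N
  induction N with
  | zero => funext y; simp
  | succ N ih =>
      rw [Function.iterate_succ_apply, fwd_pow, iter_sum]
      funext y
      rw [Finset.sum_range_succ, ih]
      have h0 : ∀ i ∈ Finset.range N, ((N+1).choose i : ℝ)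
          * ((fwdDiff (1:ℕ))^[N] (fun k : ℕ => (k : ℝ) ^ i) y) = 0 := by
        intro i hi
        rw [dpow_lt N i (Finset.mem_range.mp hi)]
        simp
      rw [Finset.sum_eq_zero h0]
      simp [Nat.choose_succ_self_right, Nat.factorial_succ]
      try push_cast
      try ring


lemma cast_choose_two (n : ℕ) : (((n+2).choose 2 : ℕ) : ℝ) = ((n:ℝ)+2)*((n:ℝ)+1)/2 := by
  induction n with
  | zero => norm_num
  | succ m ih =>
      rw [show m+1+2 = (m+2)+1 from rfl, Nat.choose_succ_succ]
      push_cast [ih]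
      push_cast [Nat.choose_one_right]
      ring

lemma cast_choose_three (n : ℕ) : (((n+2).choose 3 : ℕ) : ℝ) = ((n:ℝ)+2)*((n:ℝ)+1)*n/6 := by
  induction n with
  | zero => norm_num
  | succ m ih =>
      rw [show m+1+2 = (m+2)+1 from rfl, Nat.choose_succ_succ]
      push_cast [ih, cast_choose_two]
      ring

lemma cast_choose_four (n : ℕ) : (((n+3).choose 4 : ℕ) : ℝ)
    = ((n:ℝ)+3)*((n:ℝ)+2)*((n:ℝ)+1)*n/24 := by
  induction n with
  | zero => norm_num
  | succ m ih =>
      rw [show m+1+3 = (m+3)+1 from rfl, Nat.choose_succ_succ]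
      push_cast [ih]
      rw [show m+3 = (m+1)+2 from rfl, cast_choose_three]
      push_cast
      ring

lemma choose_sub_two (n : ℕ) : (n+2).choose n = (n+2).choose 2 := by
  have := Nat.choose_symm (n := n+2) (k := 2) (by omega)
  rwa [show (n+2) - 2 = n by omega] at this

lemma choose_sub_three (n : ℕ) : (n+3).choose n = (n+3).choose 3 := by
  have := Nat.choose_symm (n := n+3) (k := 3) (by omega)
  rwa [show (n+3) - 3 = n by omega] at this

lemma dpow_eq1 : ∀ N : ℕ, (fwdDiff (1:ℕ))^[N] (fun k : ℕ => (k : ℝ) ^ (N+1))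
    = fun y : ℕ => (N.factorial : ℝ) * (((N:ℝ)+1) * y + N*((N:ℝ)+1)/2) := by
  intro N
  induction N with
  | zero => funext y; simp
  | succ N ih =>
      rw [Function.iterate_succ_apply, fwd_pow, iter_sum]
      funext y
      rw [Finset.sum_range_succ, Finset.sum_range_succ, ih, dpow_eq]
      rw [Finset.sum_eq_zero (fun i hi => by
        rw [dpow_lt N i (Finset.mem_range.mp hi)]; simp)]
      have c1 : (((N+2).choose (N+1) : ℕ) : ℝ) = (N:ℝ)+2 := by
        rw [show N+2 = (N+1)+1 from rfl, Nat.choose_succ_self_right]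
        push_cast; ring
      have c2 : (((N+2).choose N : ℕ) : ℝ) = ((N:ℝ)+2)*((N:ℝ)+1)/2 := by
        rw [choose_sub_two, cast_choose_two]
      rw [show N+1+1 = N+2 from rfl, c1, c2, Nat.factorial_succ]
      push_cast
      ring

lemma dpow_eq2 : ∀ N : ℕ, (fwdDiff (1:ℕ))^[N] (fun k : ℕ => (k : ℝ) ^ (N+2))
    = fun y : ℕ => (N.factorial : ℝ) *
      (((N:ℝ)+1)*((N:ℝ)+2)/2 * y^2 + ((N:ℝ)+1)*((N:ℝ)+2)*N/2 * y
        + N*((N:ℝ)+1)*((N:ℝ)+2)*(3*N+1)/24) := by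
  intro N
  induction N with
  | zero => funext y; simp; try ring
  | succ N ih =>
      rw [Function.iterate_succ_apply, fwd_pow, iter_sum]
      funext y
      rw [show N+1+2 = (N+2)+1 from rfl]
      rw [Finset.sum_range_succ, Finset.sum_range_succ, Finset.sum_range_succ,
        ih, dpow_eq, dpow_eq1]
      rw [Finset.sum_eq_zero (fun i hi => by
        rw [dpow_lt N i (Finset.mem_range.mp hi)]; simp)]
      have c1 : (((N+3).choose (N+2) : ℕ) : ℝ) = (N:ℝ)+3 := by
        rw [show N+3 = (N+2)+1 from rfl, Nat.choose_succ_self_right]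
        push_cast; ring
      have c2 : (((N+3).choose (N+1) : ℕ) : ℝ) = ((N:ℝ)+3)*((N:ℝ)+2)/2 := by
        rw [show N+3 = (N+1)+2 from rfl, choose_sub_two, cast_choose_two]
        push_cast; ring
      have c3 : (((N+3).choose N : ℕ) : ℝ) = ((N:ℝ)+3)*((N:ℝ)+2)*((N:ℝ)+1)/6 := by
        rw [choose_sub_three, show N+3 = (N+1)+2 from rfl, cast_choose_three]
        push_cast; ring
      rw [show N+2+1 = N+3 from rfl, c1, c2, c3, Nat.factorial_succ]
      push_cast
      ring

-- evaluation of the alternating sum via forward differences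
lemma alt_sum_eq (N : ℕ) (f : ℕ → ℝ) :
    ∑ k ∈ Finset.range (N+1), ((-1:ℝ))^(N-k) * (N.choose k : ℝ) * f k
      = (fwdDiff (1:ℕ))^[N] f 0 := by
  rw [fwdDiff_iter_eq_sum_shift]
  refine Finset.sum_congr rfl fun k _ => ?_
  have hk : (0 + k • 1 : ℕ) = k := by simp
  rw [hk, zsmul_eq_mul]
  push_cast
  ring

lemma key_alt_sum (N : ℕ) :
    ∑ k ∈ Finset.range (N+1), ((-1:ℝ))^(N-k) * (N.choose k : ℝ) * (k:ℝ)^(N+2)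
      = (N.factorial : ℝ) * ((N:ℝ)*((N:ℝ)+1)*((N:ℝ)+2)*(3*(N:ℝ)+1)/24) := by
  rw [alt_sum_eq N (fun k => (k:ℝ)^(N+2)), dpow_eq2]
  push_cast
  ring


noncomputable def qq (N : ℕ) : ℝ := (N:ℝ)*((N:ℝ)+1)*((N:ℝ)+2)*(3*(N:ℝ)+1)/24

noncomputable def dd (x : ℝ) (p : ℕ × ℕ) : ℝ :=
  ((p.1:ℝ)^(p.1+2)/(p.1.factorial)) * x^p.1 * ((-(p.1:ℝ))*x)^p.2 / (p.2.factorial)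

lemma row_eq (x : ℝ) (N : ℕ) :
    ∑ k ∈ Finset.range (N+1), dd x (k, N - k) = qq N * x^N := by
  have h : ∀ k ∈ Finset.range (N+1),
      dd x (k, N - k)
        = ((-1:ℝ))^(N-k) * (N.choose k : ℝ) * (k:ℝ)^(N+2) * (x^N / (N.factorial : ℝ)) := by
    intro k hk
    have hkN : k ≤ N := by simpa [Nat.lt_succ_iff] using Finset.mem_range.mp hk
    have hfact : ((N.choose k : ℕ) : ℝ) * (k.factorial : ℝ) * ((N-k).factorial : ℝ)
        = (N.factorial : ℝ) := by
      exact_mod_cast congrArg (Nat.cast (R := ℝ)) (Nat.choose_mul_factorial_mul_factorial hkN)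
    have e1 : (k+2) + (N-k) = N+2 := by omega
    have e2 : k + (N-k) = N := by omega
    have hx1 : (x:ℝ)^N = x^k * x^(N-k) := by rw [← pow_add, e2]
    have hx2 : (k:ℝ)^(N+2) = (k:ℝ)^(k+2) * (k:ℝ)^(N-k) := by rw [← pow_add, e1]
    simp only [dd]
    rw [show (-(k:ℝ))*x = (-1) * ((k:ℝ)*x) by ring, mul_pow, mul_pow]
    rw [hx1, hx2]
    have hk0 : (k.factorial : ℝ) ≠ 0 := by positivity
    have hN0 : ((N-k).factorial : ℝ) ≠ 0 := by positivity
    have hNN : (N.factorial : ℝ) ≠ 0 := by positivity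
    field_simp
    linear_combination (-((k:ℝ)^(k+2)*(k:ℝ)^(N-k)*x^k*x^(N-k))) * hfact
  rw [Finset.sum_congr rfl h, ← Finset.sum_mul, key_alt_sum]
  have hNN : (N.factorial : ℝ) ≠ 0 := by positivity
  rw [qq]
  field_simp

lemma q_split (N : ℕ) :
    qq N = (((N+2).choose 3 : ℕ) : ℝ) + 3 * (((N+2).choose 4 : ℕ) : ℝ) := by
  cases N with
  | zero => simp [qq]; norm_num [Nat.choose]
  | succ M =>
      rw [show M+1+2 = (M+1)+2 from rfl, cast_choose_three (M+1),
        show (M+1)+2 = M+3 from rfl, cast_choose_four M, qq]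
      push_cast
      ring

lemma q_hasSum {x : ℝ} (hx : |x| < 1) :
    HasSum (fun N : ℕ => qq N * x ^ N) ((x + 2*x^2) / (1-x)^5) := by
  have hx' : ‖x‖ < 1 := by simpa using hx
  have h3 := hasSum_choose_mul_geometric_of_norm_lt_one (𝕜 := ℝ) 3 hx'
  have h4 := hasSum_choose_mul_geometric_of_norm_lt_one (𝕜 := ℝ) 4 hx'
  -- shift h3 by one
  have h3x : HasSum (fun n : ℕ => (((n+1)+2).choose 3 : ℝ) * x ^ (n+1)) (x * (1 / (1-x)^(3+1))) := by
    have := h3.mul_left x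
    refine this.congr_fun fun n => ?_
    rw [show (n+1)+2 = n+3 from rfl, pow_succ]
    ring
  have h4x : HasSum (fun n : ℕ => (((n+2)+2).choose 4 : ℝ) * x ^ (n+2)) (x^2 * (1 / (1-x)^(4+1))) := by
    have := h4.mul_left (x^2)
    refine this.congr_fun fun n => ?_
    rw [show (n+2)+2 = n+4 from rfl, pow_add]
    ring
  have H3 : HasSum (fun N : ℕ => (((N+2).choose 3 : ℕ) : ℝ) * x ^ N)
      (x * (1 / (1-x)^(3+1))) := by
    have := (hasSum_nat_add_iff (f := fun N : ℕ => (((N+2).choose 3 : ℕ) : ℝ) * x ^ N) 1).mp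
      (h3x.congr_fun fun n => by norm_num)
    simpa [show (2).choose 3 = 0 from rfl] using this
  have H4 : HasSum (fun N : ℕ => (((N+2).choose 4 : ℕ) : ℝ) * x ^ N)
      (x^2 * (1 / (1-x)^(4+1))) := by
    have := (hasSum_nat_add_iff (f := fun N : ℕ => (((N+2).choose 4 : ℕ) : ℝ) * x ^ N) 2).mp
      (h4x.congr_fun fun n => by norm_num)
    simpa [Finset.sum_range_succ, show (2).choose 4 = 0 from rfl, show (3).choose 4 = 0 from rfl] using this
  have hsum := H3.add (H4.mul_left 3)
  have hval : x * (1 / (1-x)^(3+1)) + 3 * (x^2 * (1 / (1-x)^(4+1)))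
      = (x + 2*x^2) / (1-x)^5 := by
    have h1 : (1:ℝ) - x ≠ 0 := by
      intro h; rw [sub_eq_zero] at h; rw [← h] at hx; simp at hx
    field_simp
    ring
  rw [hval] at hsum
  refine hsum.congr_fun fun N => ?_
  rw [q_split]
  ring

noncomputable def cf (n : ℕ) : ℝ := (n:ℝ)^(n+2) / (n.factorial : ℝ)

lemma cf_nonneg (n : ℕ) : 0 ≤ cf n := by unfold cf; positivity

lemma cf_le (n : ℕ) : cf n ≤ (n:ℝ)^2 * Real.exp 1 ^ n := by
  have h1 : ((n:ℝ))^n / (n.factorial : ℝ) ≤ Real.exp (n:ℝ) :=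
    Real.pow_div_factorial_le_exp (x := (n:ℝ)) (Nat.cast_nonneg n) n
  have h2 : Real.exp (n:ℝ) = Real.exp 1 ^ n := by
    rw [← Real.exp_nat_mul]; norm_num
  have hc : cf n = (n:ℝ)^2 * ((n:ℝ)^n / (n.factorial : ℝ)) := by
    rw [cf, pow_add]; ring
  rw [hc]
  have hn2 : (0:ℝ) ≤ (n:ℝ)^2 := by positivity
  exact mul_le_mul_of_nonneg_left (h2 ▸ h1) hn2

lemma exp_hasSum (y : ℝ) : HasSum (fun m : ℕ => y ^ m / (m.factorial : ℝ)) (Real.exp y) := by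
  have := NormedSpace.expSeries_div_hasSum_exp (𝔸 := ℝ) y
  simpa [Real.exp_eq_exp_ℝ] using this

lemma summable_cf_mul {r : ℝ} (hr0 : 0 ≤ r) (hr : Real.exp 1 * r < 1) :
    Summable (fun n : ℕ => cf n * r ^ n) := by
  refine Summable.of_nonneg_of_le (fun n => mul_nonneg (cf_nonneg n) (pow_nonneg hr0 n)) (fun n => ?_)
    (summable_pow_mul_geometric_of_norm_lt_one (R := ℝ) 2 (r := Real.exp 1 * r) ?_)
  · calc cf n * r ^ n ≤ ((n:ℝ)^2 * Real.exp 1 ^ n) * r ^ n :=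
        mul_le_mul_of_nonneg_right (cf_le n) (by positivity)
    _ = (n:ℝ)^2 * (Real.exp 1 * r) ^ n := by rw [mul_pow]; ring
  · rw [Real.norm_eq_abs, abs_of_nonneg (by positivity)]; exact hr

lemma key_small {x : ℝ} (hx : |x| < 1/8) :
    HasSum (fun n : ℕ => cf n * (x * Real.exp (-x)) ^ n) ((x + 2*x^2) / (1-x)^5) := by
  -- rows
  have hrow : ∀ n : ℕ, HasSum (fun m => dd x (n, m)) (cf n * (x * Real.exp (-x)) ^ n) := by
    intro n
    have h := (exp_hasSum (-(n:ℝ) * x)).mul_left (cf n * x ^ n)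
    have hv : cf n * x ^ n * Real.exp (-(n:ℝ) * x) = cf n * (x * Real.exp (-x)) ^ n := by
      rw [mul_pow, show -(n:ℝ) * x = (n:ℕ) * (-x) by push_cast; ring, Real.exp_nat_mul]
      ring
    rw [hv] at h
    refine h.congr_fun fun m => ?_
    simp only [dd, cf]
    ring
  -- abs rows
  have harow : ∀ n : ℕ, HasSum (fun m => |dd x (n, m)|) (cf n * (|x| * Real.exp |x|) ^ n) := by
    intro n
    have h := (exp_hasSum ((n:ℝ) * |x|)).mul_left (cf n * |x| ^ n)
    have hv : cf n * |x| ^ n * Real.exp ((n:ℝ) * |x|) = cf n * (|x| * Real.exp |x|) ^ n := by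
      rw [mul_pow, show (n:ℝ) * |x| = (n:ℕ) * |x| by push_cast; ring, Real.exp_nat_mul]
      try ring
    rw [hv] at h
    refine h.congr_fun fun m => ?_
    simp only [dd, cf, abs_div, abs_mul, abs_pow, abs_neg, Nat.abs_cast]
    have h1 : (n.factorial : ℝ) ≠ 0 := by positivity
    have h2 : (m.factorial : ℝ) ≠ 0 := by positivity
    field_simp
    try ring
  -- summable double family
  have hr1 : Real.exp 1 * (|x| * Real.exp |x|) < 1 := by
    have hb : |x| * Real.exp |x| ≤ (1/8) * Real.exp (1/8) := by
      have := Real.exp_le_exp.mpr (le_of_lt hx)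
      exact mul_le_mul (le_of_lt hx) this (Real.exp_pos _).le (by norm_num)
    have : Real.exp 1 * (|x| * Real.exp |x|) ≤ Real.exp 1 * ((1/8) * Real.exp (1/8)) :=
      mul_le_mul_of_nonneg_left hb (Real.exp_pos _).le
    refine lt_of_le_of_lt this ?_
    have he : Real.exp 1 * ((1/8) * Real.exp (1/8)) = Real.exp (9/8) / 8 := by
      have h9 : Real.exp 1 * Real.exp (1/8) = Real.exp (9/8) := by
        rw [← Real.exp_add]; norm_num
      linarith [h9]
    rw [he]
    have h2 : Real.exp (9/8) < Real.exp 2 := Real.exp_lt_exp.mpr (by norm_num)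
    have h3 : Real.exp 2 < 8 := by
      have := Real.exp_one_lt_d9
      have h4 : Real.exp 2 = Real.exp 1 * Real.exp 1 := by rw [← Real.exp_add]; norm_num
      rw [h4]; nlinarith [Real.exp_pos 1]
    linarith
  have habs : Summable (fun p : ℕ × ℕ => |dd x p|) := by
    refine (summable_prod_of_nonneg (fun p => abs_nonneg _)).mpr ⟨fun n => (harow n).summable, ?_⟩
    have : (fun n => ∑' m, |dd x (n, m)|) = fun n => cf n * (|x| * Real.exp |x|) ^ n := by
      funext n; exact (harow n).tsum_eq
    rw [this]
    exact summable_cf_mul (by positivity) hr1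
  have hsum : Summable (dd x) := habs.of_abs
  set T := ∑' p, dd x p with hT
  have hTsum : HasSum (dd x) T := hsum.hasSum
  -- fiberwise: sum over rows gives the series in n
  have hg : HasSum (fun n : ℕ => cf n * (x * Real.exp (-x)) ^ n) T :=
    hTsum.prod_fiberwise hrow
  -- diagonal regrouping
  have hφ : Function.Injective (fun p : ℕ × ℕ => (p.1 + p.2, p.1)) := by
    intro a b hab
    simp only [Prod.mk.injEq] at hab
    obtain ⟨h1, h2⟩ := hab
    exact Prod.ext h2 (by omega)
  set hfun : ℕ × ℕ → ℝ := fun q => if q.2 ≤ q.1 then dd x (q.2, q.1 - q.2) else 0 with hhfun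
  have hcomp : (hfun ∘ (fun p : ℕ × ℕ => (p.1 + p.2, p.1))) = dd x := by
    funext p
    simp only [hhfun, Function.comp_apply]
    rw [if_pos (by omega)]
    congr 1
    exact Prod.ext rfl (by omega)
  have hzero : ∀ q ∉ Set.range (fun p : ℕ × ℕ => (p.1 + p.2, p.1)), hfun q = 0 := by
    intro q hq
    rw [hhfun]
    simp only
    rw [if_neg]
    intro hle
    refine hq ⟨(q.2, q.1 - q.2), ?_⟩
    have h1 : q.2 + (q.1 - q.2) = q.1 := by omega
    simp [h1]
  have hH : HasSum hfun T := (hφ.hasSum_iff hzero).mp (by rw [hcomp]; exact hTsum)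
  have hrowsH : ∀ N : ℕ, HasSum (fun k => hfun (N, k)) (qq N * x ^ N) := by
    intro N
    have hfin : ∀ k ∉ Finset.range (N+1), hfun (N, k) = 0 := by
      intro k hk
      rw [hhfun]; simp only
      rw [if_neg (by simp at hk; omega)]
    have : HasSum (fun k => hfun (N, k)) (∑ k ∈ Finset.range (N+1), hfun (N, k)) :=
      hasSum_sum_of_ne_finset_zero hfin
    have heq : ∑ k ∈ Finset.range (N+1), hfun (N, k)
        = ∑ k ∈ Finset.range (N+1), dd x (k, N - k) := by
      refine Finset.sum_congr rfl fun k hk => ?_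
      rw [hhfun]; simp only
      rw [if_pos (by simp at hk; omega)]
    rw [heq, row_eq] at this
    exact this
  have hdiag : HasSum (fun N : ℕ => qq N * x ^ N) T := hH.prod_fiberwise hrowsH
  have hx1 : |x| < 1 := lt_trans hx (by norm_num)
  have := (q_hasSum hx1).unique hdiag
  rw [← this] at hg
  exact hg



open FormalMultilinearSeries
open scoped NNReal ENNReal

noncomputable def pp : FormalMultilinearSeries ℝ ℝ ℝ := ofScalars ℝ cf

-- the map x ↦ x e^{-x} stays small on (-1/8, 1)
lemma zmap_small {y : ℝ} (hy : y ∈ Set.Ioo (-(1/8) : ℝ) 1) :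
    |y * Real.exp (-y)| < Real.exp (-1) := by
  obtain ⟨hy1, hy2⟩ := hy
  rcases le_or_gt 0 y with h0 | h0
  · have habs : |y * Real.exp (-y)| = y * Real.exp (-y) := by
      rw [abs_of_nonneg (mul_nonneg h0 (Real.exp_pos _).le)]
    rw [habs]
    have h1 : y < Real.exp (y - 1) := by
      have := Real.add_one_lt_exp (x := y - 1) (by intro h; rw [sub_eq_zero] at h; exact absurd h (ne_of_lt hy2))
      linarith
    calc y * Real.exp (-y) < Real.exp (y-1) * Real.exp (-y) :=
          mul_lt_mul_of_pos_right h1 (Real.exp_pos _)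
      _ = Real.exp (-1) := by rw [← Real.exp_add]; ring_nf
  · have habs : |y * Real.exp (-y)| = (-y) * Real.exp (-y) := by
      rw [abs_mul, abs_of_neg h0, abs_of_pos (Real.exp_pos _)]
    rw [habs]
    have hb1 : -y < 1/8 := by linarith
    have hb2 : Real.exp (-y) < Real.exp (1/8) := Real.exp_lt_exp.mpr (by linarith)
    have hb3 : (-y) * Real.exp (-y) < (1/8) * Real.exp (1/8) :=
      mul_lt_mul'' hb1 hb2 (by linarith) (Real.exp_pos _).le
    refine lt_trans hb3 ?_
    -- (1/8) e^{1/8} < e^{-1}  ⇔  e^{9/8} < 8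
    have h9 : Real.exp (1/8) * Real.exp 1 = Real.exp (9/8) := by
      rw [← Real.exp_add]; norm_num
    have h2 : Real.exp (9/8) < Real.exp 2 := Real.exp_lt_exp.mpr (by norm_num)
    have h3 : Real.exp 2 < 8 := by
      have := Real.exp_one_lt_d9
      have h4 : Real.exp 2 = Real.exp 1 * Real.exp 1 := by rw [← Real.exp_add]; norm_num
      rw [h4]; nlinarith [Real.exp_pos 1]
    have hexp1 : 0 < Real.exp 1 := Real.exp_pos 1
    rw [show Real.exp (-1) = 1 / Real.exp 1 by rw [Real.exp_neg]; ring]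
    rw [lt_div_iff₀ hexp1]
    nlinarith [h9, h2, h3, Real.exp_pos (1/8 : ℝ)]

lemma pp_analyticAt {z : ℝ} (hz : |z| < Real.exp (-1)) :
    AnalyticAt ℝ (ofScalarsSum (E := ℝ) cf) z := by
  set r : ℝ := (|z| + Real.exp (-1)) / 2 with hr
  have hr0 : 0 < r := by positivity
  have hzr : |z| < r := by rw [hr]; linarith
  have hre : r < Real.exp (-1) := by rw [hr]; linarith
  have hsum : Summable (fun n : ℕ => ‖pp n‖ * (r.toNNReal : ℝ) ^ n) := by
    have hco : ((r.toNNReal : ℝ≥0) : ℝ) = r := Real.coe_toNNReal r hr0.le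
    rw [hco]
    have hnorm : ∀ n, ‖pp n‖ = cf n := by
      intro n
      rw [pp, ofScalars_norm]
      exact abs_of_nonneg (cf_nonneg n)
    simp only [hnorm]
    refine summable_cf_mul hr0.le ?_
    calc Real.exp 1 * r < Real.exp 1 * Real.exp (-1) :=
          mul_lt_mul_of_pos_left hre (Real.exp_pos 1)
      _ = 1 := by rw [← Real.exp_add]; norm_num
  have hrad : (r.toNNReal : ℝ≥0∞) ≤ pp.radius := pp.le_radius_of_summable_norm hsum
  have hradpos : 0 < pp.radius := lt_of_lt_of_le (by
    simp only [ENNReal.coe_pos]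
    exact Real.toNNReal_pos.mpr hr0) hrad
  have hball := pp.hasFPowerSeriesOnBall hradpos
  have hmem : z ∈ Metric.eball (0 : ℝ) pp.radius := by
    rw [Metric.mem_eball, edist_dist]
    have hd : dist z 0 = |z| := by simp [Real.dist_eq]
    calc ENNReal.ofReal (dist z 0) < ENNReal.ofReal r := by
          rw [hd]; exact ENNReal.ofReal_lt_ofReal_iff_of_nonneg (abs_nonneg z) |>.mpr hzr
      _ = (r.toNNReal : ℝ≥0∞) := rfl
      _ ≤ pp.radius := hrad
  have := hball.analyticAt_of_mem hmem
  have hsumeq : pp.sum = ofScalarsSum (E := ℝ) cf := rfl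
  rwa [hsumeq] at this

noncomputable def FF : ℝ → ℝ := fun y => ofScalarsSum (E := ℝ) cf (y * Real.exp (-y))
noncomputable def RR : ℝ → ℝ := fun y => (y + 2*y^2) / (1-y)^5

lemma zmap_analyticAt (y : ℝ) : AnalyticAt ℝ (fun t : ℝ => t * Real.exp (-t)) y := by
  have h1 : AnalyticAt ℝ (fun t : ℝ => t) y := analyticAt_id
  have h2 : AnalyticAt ℝ (fun t : ℝ => Real.exp (-t)) y := by
    have := (analyticAt_rexp (x := -y)).comp ((analyticAt_id (𝕜 := ℝ) (z := y) (E := ℝ))).neg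
    simpa [Function.comp_def] using this
  exact h1.mul h2

lemma FF_analyticOn : AnalyticOnNhd ℝ FF (Set.Ioo (-(1/8) : ℝ) 1) := by
  intro y hy
  have := AnalyticAt.comp (g := ofScalarsSum (E := ℝ) cf)
    (f := fun t : ℝ => t * Real.exp (-t)) (x := y)
    (pp_analyticAt (zmap_small hy)) (zmap_analyticAt y)
  exact this

lemma RR_analyticOn : AnalyticOnNhd ℝ RR (Set.Ioo (-(1/8) : ℝ) 1) := by
  intro y hy
  have hnum : AnalyticAt ℝ (fun t : ℝ => t + 2*t^2) y :=
    analyticAt_id.add ((analyticAt_const (v := (2:ℝ))).mul (analyticAt_id.pow 2))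
  have hden : AnalyticAt ℝ (fun t : ℝ => (1-t)^5) y :=
    ((analyticAt_const (v := (1:ℝ))).sub analyticAt_id).pow 5
  exact hnum.div hden (pow_ne_zero 5 (by intro h; rw [sub_eq_zero] at h; have := hy.2; linarith [h.symm ▸ hy.2]))

lemma FF_tsum_eq {y : ℝ} : FF y = ∑' n, cf n * (y * Real.exp (-y)) ^ n := by
  rw [FF, ofScalarsSum_eq_tsum]
  simp [smul_eq_mul]

lemma FF_eq_RR_on : Set.EqOn FF RR (Set.Ioo (-(1/8) : ℝ) 1) := by
  have hU : IsPreconnected (Set.Ioo (-(1/8) : ℝ) 1) := isPreconnected_Ioo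
  have h0 : (0:ℝ) ∈ Set.Ioo (-(1/8) : ℝ) 1 := by constructor <;> norm_num
  have hev : FF =ᶠ[nhds (0:ℝ)] RR := by
    have hmem : Set.Ioo (-(1/8) : ℝ) (1/8) ∈ nhds (0:ℝ) := Ioo_mem_nhds (by norm_num) (by norm_num)
    refine Filter.eventuallyEq_of_mem hmem fun y hy => ?_
    have hy8 : |y| < 1/8 := by
      rw [abs_lt]; exact ⟨by linarith [hy.1], hy.2⟩
    rw [FF_tsum_eq, RR]
    exact (key_small hy8).tsum_eq
  exact FF_analyticOn.eqOn_of_preconnected_of_eventuallyEq RR_analyticOn hU h0 hev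

/-- for `0 ≤ x < 1`,
`∑_{D=1}^∞ (D^{D+2}/D!)·(x·e^{−x})^D = (x + 2x²)/(1−x)^5`. -/
theorem stmt10 (x : ℝ) (hx0 : 0 ≤ x) (hx1 : x < 1) :
    HasSum
      (fun n : ℕ =>
        ((n + 1 : ℕ) ^ ((n + 1) + 2) / (n + 1).factorial : ℝ) * (x * Real.exp (-x)) ^ (n + 1))
      ((x + 2 * x ^ 2) / (1 - x) ^ 5) := by
  have hxU : x ∈ Set.Ioo (-(1/8) : ℝ) 1 := ⟨by linarith, hx1⟩
  have hz : |x * Real.exp (-x)| < Real.exp (-1) := zmap_small hxU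
  set z := x * Real.exp (-x) with hzdef
  have hz0 : 0 ≤ z := mul_nonneg hx0 (Real.exp_pos _).le
  have hsummable : Summable (fun n : ℕ => cf n * z ^ n) := by
    refine summable_cf_mul hz0 ?_
    have : z < Real.exp (-1) := by rwa [abs_of_nonneg hz0] at hz
    calc Real.exp 1 * z < Real.exp 1 * Real.exp (-1) :=
          mul_lt_mul_of_pos_left this (Real.exp_pos 1)
      _ = 1 := by rw [← Real.exp_add]; norm_num
  have hg : HasSum (fun n : ℕ => cf n * z ^ n) (∑' n, cf n * z ^ n) := hsummable.hasSum
  have hval : (∑' n, cf n * z ^ n) = (x + 2*x^2) / (1-x)^5 := by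
    have h1 : FF x = RR x := FF_eq_RR_on hxU
    rw [FF_tsum_eq, RR] at h1
    exact h1
  rw [hval] at hg
  have hg' : HasSum (fun n : ℕ => cf (n+1) * z ^ (n+1)) ((x + 2*x^2) / (1-x)^5) := by
    rw [hasSum_nat_add_iff (f := fun n : ℕ => cf n * z ^ n) 1]
    simpa [cf] using hg
  refine hg'.congr_fun fun n => ?_
  simp only [cf]
  try push_cast
  try ring
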